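/- Let S[1..n] be a string, let 0 < τ ≤ 1, and let 1 ≤ i ≤ k ≤ j ≤ n with a = S[k]. Suppose k is the leftmost occurrence of a in S[i..j], i.e. there is no position p with i ≤ p < k and S[p] = a. Let r = occ(a, S[1..k]). Then a is a τ-majority of S[i..j] if and only if occ(a, S[1..j]) ≥ r + ⌈τ·(j−i+1)⌉ − 1; equivalently, a is a τ-minority of S[i..j] if and only if the (r + ⌈τ·(j−i+1)⌉ − 1)-th occurrence of a in S either does not exist or lies strictly after position j. -/
import Mathlib


/-- `occ S a i j` is the number of positions `k` with `i ≤ k ≤ j` and `S k = a`. -/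
def occ {α : Type*} [DecidableEq α] (S : ℕ → α) (a : α) (i j : ℕ) : ℕ :=
  ((Finset.Icc i j).filter (fun k => S k = a)).card

lemma occ_split {α : Type*} [DecidableEq α] (S : ℕ → α) (a : α) {i m j : ℕ}
    (h1 : i ≤ m + 1) (h2 : m ≤ j) :
    occ S a i j = occ S a i m + occ S a (m + 1) j := by
  unfold occ
  have hset : Finset.Icc i j = Finset.Icc i m ∪ Finset.Icc (m + 1) j := by
    ext p; simp only [Finset.mem_union, Finset.mem_Icc]; omega
  rw [hset, Finset.filter_union, Finset.card_union_of_disjoint]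
  simp only [Finset.disjoint_left, Finset.mem_filter, Finset.mem_Icc]
  rintro p ⟨⟨_, hp⟩, _⟩ ⟨⟨hp', _⟩, _⟩
  omega

lemma occ_mono {α : Type*} [DecidableEq α] (S : ℕ → α) (a : α) {i p q : ℕ}
    (h : p ≤ q) : occ S a i p ≤ occ S a i q :=
  Finset.card_le_card (Finset.filter_subset_filter _ (Finset.Icc_subset_Icc_right h))

lemma occ_self {α : Type*} [DecidableEq α] (S : ℕ → α) (a : α) (k : ℕ) :
    occ S a k k = if S k = a then 1 else 0 := by
  simp only [occ, Finset.Icc_self, Finset.filter_singleton]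
  split <;> simp

/-- Lemma: checking whether a symbol is a τ-majority (equivalently, a τ-minority)
of `S[i..j]` from the position `k` of its leftmost occurrence in the range,
via a (partial) rank and a select query. -/
theorem stmt_0 {α : Type*} [DecidableEq α] (S : ℕ → α) (n : ℕ) (τ : ℝ)
    (hτ0 : 0 < τ) (hτ1 : τ ≤ 1) (i k j : ℕ)
    (hi : 1 ≤ i) (hik : i ≤ k) (hkj : k ≤ j) (hjn : j ≤ n)
    (a : α) (ha : S k = a)
    (hleft : ∀ p, i ≤ p → p < k → S p ≠ a) :
    (((occ S a i j : ℝ) ≥ τ * ((j : ℝ) - (i : ℝ) + 1)) ↔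
      ((occ S a 1 j : ℤ) ≥
        (occ S a 1 k : ℤ) + ⌈τ * ((j : ℝ) - (i : ℝ) + 1)⌉ - 1))
    ∧
    (((occ S a i j : ℝ) < τ * ((j : ℝ) - (i : ℝ) + 1)) ↔
      ((occ S a 1 n : ℤ) <
          (occ S a 1 k : ℤ) + ⌈τ * ((j : ℝ) - (i : ℝ) + 1)⌉ - 1 ∨
        ∃ p, p ≤ n ∧ S p = a ∧
          (occ S a 1 p : ℤ) =
            (occ S a 1 k : ℤ) + ⌈τ * ((j : ℝ) - (i : ℝ) + 1)⌉ - 1 ∧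
          j < p)) := by
  set x : ℝ := τ * ((j : ℝ) - (i : ℝ) + 1) with hx
  set m : ℤ := ⌈x⌉ with hm
  have hk1 : 1 ≤ k := le_trans hi hik
  have hxpos : 0 < x := by
    apply mul_pos hτ0
    have : (i : ℝ) ≤ (j : ℝ) := by exact_mod_cast le_trans hik hkj
    linarith
  have hm1 : 1 ≤ m := by
    rw [hm]; exact_mod_cast Int.ceil_pos.mpr hxpos
  -- splitting facts
  have hs1 : occ S a 1 j = occ S a 1 (k - 1) + occ S a k j := by
    have := occ_split S a (i := 1) (m := k - 1) (j := j) (by omega) (by omega)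
    rwa [show k - 1 + 1 = k by omega] at this
  have hs2 : occ S a i j = occ S a i (k - 1) + occ S a k j := by
    have := occ_split S a (i := i) (m := k - 1) (j := j) (by omega) (by omega)
    rwa [show k - 1 + 1 = k by omega] at this
  have hzero : occ S a i (k - 1) = 0 := by
    simp only [occ, Finset.card_eq_zero, Finset.filter_eq_empty_iff, Finset.mem_Icc]
    rintro p ⟨hp1, hp2⟩
    exact hleft p hp1 (by omega)
  have hs3 : occ S a 1 k = occ S a 1 (k - 1) + 1 := by
    have := occ_split S a (i := 1) (m := k - 1) (j := k) (by omega) (by omega)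
    rw [show k - 1 + 1 = k by omega] at this
    rw [this, occ_self, if_pos ha]
  have hkey : (occ S a 1 j : ℤ) = (occ S a 1 k : ℤ) - 1 + (occ S a i j : ℤ) := by
    push_cast [hs1, hs2, hzero, hs3]; ring
  -- step lemma
  have hstep : ∀ p : ℕ, 1 ≤ p →
      occ S a 1 p = occ S a 1 (p - 1) + (if S p = a then 1 else 0) := by
    intro p hp
    have := occ_split S a (i := 1) (m := p - 1) (j := p) (by omega) (by omega)
    rw [show p - 1 + 1 = p by omega] at this
    rw [this, occ_self]
  have hmaj : ((occ S a i j : ℝ) ≥ x) ↔ (m ≤ (occ S a i j : ℤ)) := by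
    rw [hm, Int.ceil_le]
    push_cast
    exact Iff.rfl
  have first : ((occ S a i j : ℝ) ≥ x) ↔
      ((occ S a 1 j : ℤ) ≥ (occ S a 1 k : ℤ) + m - 1) := by
    rw [hmaj]; omega
  refine ⟨first, ?_⟩
  have hnot : ((occ S a i j : ℝ) < x) ↔ ((occ S a 1 j : ℤ) < (occ S a 1 k : ℤ) + m - 1) := by
    rw [← not_le, ← not_le]
    exact not_congr first
  rw [hnot]
  set T : ℤ := (occ S a 1 k : ℤ) + m - 1 with hT
  have hocck : 1 ≤ occ S a 1 k := by omega
  have hT1 : 1 ≤ T := by omega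
  constructor
  · intro hlt
    by_cases hn : (occ S a 1 n : ℤ) < T
    · exact Or.inl hn
    · right
      push_neg at hn
      set t : ℕ := T.toNat with ht
      have htT : (t : ℤ) = T := Int.toNat_of_nonneg (by omega)
      have hPn : t ≤ occ S a 1 n := by omega
      have hex : ∃ p, t ≤ occ S a 1 p := ⟨n, hPn⟩
      set p := Nat.find hex with hp
      have hspec : t ≤ occ S a 1 p := Nat.find_spec hex
      have hpn : p ≤ n := Nat.find_min' hex hPn
      have hp1 : 1 ≤ p := by
        rcases Nat.eq_zero_or_pos p with h0 | h0
        · exfalso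
          have : occ S a 1 0 = 0 := by simp [occ]
          rw [h0, this] at hspec; omega
        · exact h0
      have hmin : ¬ (t ≤ occ S a 1 (p - 1)) := Nat.find_min hex (by omega)
      have hSp : S p = a := by
        by_contra hna
        have := hstep p hp1
        rw [if_neg hna] at this
        omega
      have hval : occ S a 1 p = t := by
        have := hstep p hp1
        rw [if_pos hSp] at this
        omega
      have hjp : j < p := by
        by_contra hle
        push_neg at hle
        have := occ_mono S a (i := 1) hle
        omega
      exact ⟨p, hpn, hSp, by rw [hval]; omega, hjp⟩
  · rintro (h | ⟨p, hpn, hSp, hocc, hjp⟩)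
    · have := occ_mono S a (i := 1) hjn
      omega
    · have hp1 : 1 ≤ p := by omega
      have h1 : occ S a 1 p = occ S a 1 (p - 1) + 1 := by
        have := hstep p hp1
        rwa [if_pos hSp] at this
      have h2 := occ_mono S a (i := 1) (show j ≤ p - 1 by omega)
      omega
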